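/- Fix x₀ ∈ ℙ¹(ℚ). A group homomorphism h : Γ₀(N) → ℚ is of the form h(γ) = Φ([γ⁻¹·x₀] − [x₀]) for some additive, Γ₀(N)-invariant map Φ : Δ₀ → ℚ if and only if h vanishes on the stabilizer in Γ₀(N) of every point of ℙ¹(ℚ). -/
import Mathlib


/-! Setup: `Γ₀(N) ≤ SL(2, ℤ)` acts on `ℙ¹(ℚ)`; `Δ = ℤ[ℙ¹(ℚ)]`, `Δ₀` the degree-zero divisors. -/

noncomputable section

/-- The projective line over `ℚ`, i.e. the projectivization of `ℚ²`. -/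
abbrev P1 : Type := Projectivization ℚ (Fin 2 → ℚ)

/-- The action of `SL(2, ℤ)` on `ℙ¹(ℚ)`, via the linear action of `SL(2, ℚ)` on `ℚ²`. -/
def smulP1 (g : Matrix.SpecialLinearGroup (Fin 2) ℤ) (x : P1) : P1 :=
  Projectivization.map
    ((Matrix.SpecialLinearGroup.toLin'
        (Matrix.SpecialLinearGroup.map (Int.castRingHom ℚ) g)) : (Fin 2 → ℚ) →ₗ[ℚ] (Fin 2 → ℚ))
    (LinearEquiv.injective _) x

/-- The degree of a divisor on `ℙ¹(ℚ)`: the sum of its coefficients. -/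
def degMap : (P1 →₀ ℤ) →+ ℤ := Finsupp.liftAddHom fun _ => AddMonoidHom.id ℤ

/-- `Δ₀`: the subgroup of divisors of degree `0`. -/
def Delta0 : AddSubgroup (P1 →₀ ℤ) := degMap.ker

lemma degMap_mapDomain (f : P1 → P1) (d : P1 →₀ ℤ) :
    degMap (Finsupp.mapDomain f d) = degMap d := by
  classical
  simp only [degMap, Finsupp.liftAddHom_apply]
  exact Finsupp.sum_mapDomain_index_addMonoidHom (h := fun _ => AddMonoidHom.id ℤ)

/-- The action of `SL(2, ℤ)` on degree-zero divisors on `ℙ¹(ℚ)`. -/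
def smulDelta0 (g : Matrix.SpecialLinearGroup (Fin 2) ℤ) (d : ↥Delta0) : ↥Delta0 :=
  ⟨Finsupp.mapDomain (smulP1 g) d.1, by
    have hd := d.2
    simp only [Delta0, AddMonoidHom.mem_ker] at hd ⊢
    rw [degMap_mapDomain]
    exact hd⟩

/-- The degree-zero divisor `[a] - [b]`. -/
def divOf (a b : P1) : ↥Delta0 :=
  ⟨Finsupp.single a 1 - Finsupp.single b 1, by
    simp only [Delta0, AddMonoidHom.mem_ker]
    rw [map_sub]
    simp [degMap, Finsupp.liftAddHom_apply_single]⟩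

lemma smulP1_one (x : P1) : smulP1 1 x = x := by
  induction' x using Projectivization.ind with v hv
  simp only [smulP1, Projectivization.map_mk]
  congr 1
  simp

lemma smulP1_mul (g₁ g₂ : Matrix.SpecialLinearGroup (Fin 2) ℤ) (x : P1) :
    smulP1 (g₁ * g₂) x = smulP1 g₁ (smulP1 g₂ x) := by
  induction' x using Projectivization.ind with v hv
  simp only [smulP1, Projectivization.map_mk]
  congr 1
  simp

lemma smulP1_inv_eq_iff (g : Matrix.SpecialLinearGroup (Fin 2) ℤ) (x y : P1) :
    smulP1 g⁻¹ x = y ↔ x = smulP1 g y := by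
  constructor
  · rintro rfl; rw [← smulP1_mul, mul_inv_cancel, smulP1_one]
  · rintro rfl; rw [← smulP1_mul, inv_mul_cancel, smulP1_one]

lemma smulDelta0_divOf (g : Matrix.SpecialLinearGroup (Fin 2) ℤ) (a b : P1) :
    smulDelta0 g (divOf a b) = divOf (smulP1 g a) (smulP1 g b) := by
  apply Subtype.ext
  simp only [smulDelta0, divOf]
  have := map_sub (Finsupp.mapDomain.addMonoidHom (M := ℤ) (smulP1 g))
    (Finsupp.single a 1) (Finsupp.single b 1)
  simp only [Finsupp.mapDomain.addMonoidHom_apply] at this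
  rw [this, Finsupp.mapDomain_single, Finsupp.mapDomain_single]

/-- a group homomorphism `h : Γ₀(N) → ℚ` comes from an additive,
`Γ₀(N)`-invariant map `Φ : Δ₀ → ℚ` via `h(γ) = Φ([γ⁻¹·x₀] - [x₀])` if and only if `h`
vanishes on the stabilizer in `Γ₀(N)` of every point of `ℙ¹(ℚ)`. -/
theorem hom_eq_modularSymbol_cocycle_iff_vanishes_on_stabilizers
    (N : ℕ) (hN : 0 < N) (x₀ : P1)
    (h : ↥(CongruenceSubgroup.Gamma0 N) → ℚ)
    (hhom : ∀ γ₁ γ₂ : ↥(CongruenceSubgroup.Gamma0 N), h (γ₁ * γ₂) = h γ₁ + h γ₂) :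
    (∃ Φ : ↥Delta0 →+ ℚ,
        (∀ γ ∈ CongruenceSubgroup.Gamma0 N, ∀ d : ↥Delta0, Φ (smulDelta0 γ d) = Φ d) ∧
        (∀ γ : ↥(CongruenceSubgroup.Gamma0 N), h γ = Φ (divOf (smulP1 (↑γ)⁻¹ x₀) x₀))) ↔
      (∀ s : P1, ∀ γ : ↥(CongruenceSubgroup.Gamma0 N), smulP1 ↑γ s = s → h γ = 0) := by

  classical
  have h1 : h 1 = 0 := by
    have := hhom 1 1; rw [mul_one] at this; linarith
  have hinvh : ∀ γ : ↥(CongruenceSubgroup.Gamma0 N), h γ⁻¹ = - h γ := by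
    intro γ
    have := hhom γ⁻¹ γ; rw [inv_mul_cancel, h1] at this; linarith
  constructor
  · rintro ⟨Φ, hinv, hΦ⟩ s γ hfix
    have hfix' : smulP1 (↑γ : Matrix.SpecialLinearGroup (Fin 2) ℤ)⁻¹ s = s := by
      rw [smulP1_inv_eq_iff, hfix]
    rw [hΦ γ]
    have hsplit : divOf (smulP1 (↑γ : Matrix.SpecialLinearGroup (Fin 2) ℤ)⁻¹ x₀) x₀ =
        smulDelta0 (↑γ)⁻¹ (divOf x₀ s) + divOf (smulP1 (↑γ)⁻¹ s) s + divOf s x₀ := by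
      apply Subtype.ext
      rw [smulDelta0_divOf]
      show _ = ((_ : P1 →₀ ℤ) + _) + _
      simp only [divOf]
      abel
    rw [hsplit, map_add, map_add]
    have hmem : ((↑γ : Matrix.SpecialLinearGroup (Fin 2) ℤ)⁻¹) ∈ CongruenceSubgroup.Gamma0 N := by
      rw [← Subgroup.coe_inv]; exact (γ⁻¹).2
    rw [hinv _ hmem (divOf x₀ s), hfix']
    have hzero : divOf s s = (0 : ↥Delta0) := by
      apply Subtype.ext; simp [divOf]
    have hcancel : divOf x₀ s + divOf s x₀ = (0 : ↥Delta0) := by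
      apply Subtype.ext
      show ((_ : P1 →₀ ℤ) - _) + (_ - _) = 0
      abel
    rw [hzero, map_zero]
    have := congrArg Φ hcancel
    rw [map_add, map_zero] at this
    linarith
  · intro hstab
    -- construct Φ via orbit representatives
    let st : Setoid P1 :=
      ⟨fun a b => ∃ γ : ↥(CongruenceSubgroup.Gamma0 N), smulP1 ↑γ b = a, by
        constructor
        · intro a; exact ⟨1, by simpa using smulP1_one a⟩
        · rintro a b ⟨γ, hγ⟩
          refine ⟨γ⁻¹, ?_⟩
          rw [Subgroup.coe_inv, smulP1_inv_eq_iff, hγ]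
        · rintro a b c ⟨γ, hγ⟩ ⟨δ, hδ⟩
          exact ⟨γ * δ, by rw [Subgroup.coe_mul, smulP1_mul, hδ, hγ]⟩⟩
    let rep : P1 → P1 := fun s => (Quotient.mk st s).out
    have hrep : ∀ s : P1, ∃ γ : ↥(CongruenceSubgroup.Gamma0 N), smulP1 ↑γ (rep s) = s := by
      intro s
      obtain ⟨γ, hγ⟩ := @Quotient.mk_out P1 st s
      refine ⟨γ⁻¹, ?_⟩
      rw [Subgroup.coe_inv, smulP1_inv_eq_iff, hγ]
    choose g hg using hrep
    have hrep_smul : ∀ (γ : ↥(CongruenceSubgroup.Gamma0 N)) (s : P1),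
        rep (smulP1 ↑γ s) = rep s := by
      intro γ s
      show (Quotient.mk st _).out = (Quotient.mk st s).out
      congr 1
      exact Quotient.sound ⟨γ, rfl⟩
    -- well-definedness
    have hwd : ∀ (s : P1) (γ : ↥(CongruenceSubgroup.Gamma0 N)),
        smulP1 ↑γ (rep s) = s → h γ = h (g s) := by
      intro s γ hγ
      have hfix : smulP1 ↑((g s)⁻¹ * γ) (rep s) = rep s := by
        rw [Subgroup.coe_mul, smulP1_mul, hγ, Subgroup.coe_inv, smulP1_inv_eq_iff, hg]
      have := hstab (rep s) _ hfix
      rw [hhom, hinvh] at this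
      linarith
    set ψ : P1 → ℚ := fun s => - h (g s) with hψdef
    have hψ : ∀ (γ : ↥(CongruenceSubgroup.Gamma0 N)) (s : P1),
        ψ (smulP1 ↑γ s) = ψ s - h γ := by
      intro γ s
      have hkey : h (γ⁻¹ * g (smulP1 ↑γ s)) = h (g s) := by
        apply hwd
        rw [Subgroup.coe_mul, smulP1_mul, Subgroup.coe_inv, smulP1_inv_eq_iff]
        rw [← hrep_smul γ s]
        exact hg (smulP1 ↑γ s)
      rw [hhom, hinvh] at hkey
      simp only [hψdef]
      linarith
    refine ⟨(Finsupp.liftAddHom fun s => (zmultiplesHom ℚ) (ψ s)).comp Delta0.subtype, ?_, ?_⟩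
    · intro γ hγ d
      have hd : degMap d.1 = 0 := d.2
      simp only [AddMonoidHom.coe_comp, Function.comp_apply, AddSubgroup.coe_subtype,
        smulDelta0, Finsupp.liftAddHom_apply]
      rw [Finsupp.sum_mapDomain_index_addMonoidHom
        (h := fun s => (zmultiplesHom ℚ) (ψ s)) (f := smulP1 γ)]
      have : ∀ s : P1, ψ (smulP1 γ s) = ψ s - h ⟨γ, hγ⟩ := fun s => hψ ⟨γ, hγ⟩ s
      calc (d.1.sum fun a m => (zmultiplesHom ℚ) (ψ (smulP1 γ a)) m)
          = d.1.sum fun a m => m • ψ a - m • h ⟨γ, hγ⟩ := by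
            apply Finsupp.sum_congr
            intro s _
            simp [this s, smul_sub]
        _ = (d.1.sum fun a m => m • ψ a) - (d.1.sum fun _ m => m • h ⟨γ, hγ⟩) :=
            Finsupp.sum_sub
        _ = d.1.sum fun a m => m • ψ a := by
            have : (d.1.sum fun _ m => m • h ⟨γ, hγ⟩) = (degMap d.1) • h ⟨γ, hγ⟩ := by
              rw [Finsupp.sum]
              rw [show degMap d.1 = ∑ a ∈ d.1.support, d.1 a from rfl]
              rw [Finset.sum_smul]
            rw [this, hd, zero_smul, sub_zero]
        _ = _ := rfl
    · intro γ
      simp only [AddMonoidHom.coe_comp, Function.comp_apply, AddSubgroup.coe_subtype, divOf,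
        map_sub, Finsupp.liftAddHom_apply_single]
      have : smulP1 (↑γ)⁻¹ x₀ = smulP1 (↑(γ⁻¹) : Matrix.SpecialLinearGroup (Fin 2) ℤ) x₀ := by
        rw [Subgroup.coe_inv]
      rw [this, hψ γ⁻¹ x₀, hinvh]
      simp

end
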